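/- Let g be a Lie bialgebra and V a Lie bialgebra with bracket {·,·} and cobracket δ_V, equipped with a left V-module action ⊳ on g, a right g-module action ⊲ on V, and maps f : V×V → g, Δ_E, Δ_V all trivial except ⊳, ⊲, {·,·}, δ_V. Then the double cross sum data (⊲, ⊳, {·,·}, δ_V) yields a Lie bialgebra structure on g ⊕ V with bracket [a+x, b+y] = [a,b] + x⊳b − y⊳a + x⊲b − y⊲a + {x,y} and cobracket δ(a+x) = δ_g(a) + δ_V(x) if and only if: (V,⊲) is a right g-module, (g,⊳) is a left V-module, the matched-pair conditions (LE3) x⊳[a,b] = [x⊳a,b] + [a,x⊳b] + (x⊲a)⊳b − (x⊲b)⊳a and (LE4) {x,y}⊲a = {x, y⊲a} + {x⊲a, y} + x⊲(y⊳a) − y⊲(x⊳a) hold, δ_V(x⊲a) = (I⊗R_⊲(a) + R_⊲(a)⊗I)δ_V(x), {x,y}⊳a = x⊳(y⊳a) − y⊳(x⊳a), δ_g(x⊳a) = (L_⊳(x)⊗I + I⊗L_⊳(x))δ_g(a), and (R_⊳(a)⊗I)δ_V(x) + (I⊗L_⊲(x))δ_g(x) = 0, for all a, b ∈ g and x, y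 ∈ V. -/

import Mathlib

open TensorProduct LinearMap

noncomputable section

/-- The flip `A ⊗ B → B ⊗ A`. -/
def flipT (k A B : Type*) [Field k] [AddCommGroup A] [Module k A]
    [AddCommGroup B] [Module k B] : A ⊗[k] B →ₗ[k] B ⊗[k] A :=
  (TensorProduct.comm k A B).toLinearMap

/-- Swap of the first two tensor factors `A ⊗ (B ⊗ C) → B ⊗ (A ⊗ C)`. -/
def swap12 (k A B C : Type*) [Field k] [AddCommGroup A] [Module k A]
    [AddCommGroup B] [Module k B] [AddCommGroup C] [Module k C] :
    A ⊗[k] (B ⊗[k] C) →ₗ[k] B ⊗[k] (A ⊗[k] C) :=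
  (TensorProduct.assoc k B A C).toLinearMap ∘ₗ
    rTensor C (flipT k A B) ∘ₗ (TensorProduct.assoc k A B C).symm.toLinearMap

/-- Associator as a linear map. -/
def asr (k A B C : Type*) [Field k] [AddCommGroup A] [Module k A]
    [AddCommGroup B] [Module k B] [AddCommGroup C] [Module k C] :
    (A ⊗[k] B) ⊗[k] C →ₗ[k] A ⊗[k] (B ⊗[k] C) :=
  (TensorProduct.assoc k A B C).toLinearMap

/-- `δ : M → M ⊗ M` is a Lie coalgebra structure: anti-cocommutativity and co-Jacobi. -/
def IsLieCoalgebra {k M : Type*} [Field k] [AddCommGroup M] [Module k M]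
    (δ : M →ₗ[k] M ⊗[k] M) : Prop :=
  (∀ m, flipT k M M (δ m) = - δ m) ∧
  (∀ m, lTensor M δ (δ m) - swap12 k M M M (lTensor M δ (δ m)) =
      asr k M M M (rTensor M δ (δ m)))

/-- A (bilinear) map `b` is a Lie bracket: alternating and Jacobi (in Leibniz form). -/
def IsLieBracket {k L : Type*} [Field k] [AddCommGroup L] [Module k L]
    (b : L →ₗ[k] L →ₗ[k] L) : Prop :=
  (∀ a, b a a = 0) ∧ (∀ a c d, b a (b c d) = b (b a c) d + b c (b a d))

/-- The adjoint action of `a` on `L ⊗ L`: `a.(Σ b₁⊗b₂) = Σ [a,b₁]⊗b₂ + b₁⊗[a,b₂]`. -/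
def adT {k L : Type*} [Field k] [AddCommGroup L] [Module k L]
    (b : L →ₗ[k] L →ₗ[k] L) (a : L) : L ⊗[k] L →ₗ[k] L ⊗[k] L :=
  rTensor L (b a) + lTensor L (b a)

/-- `(L, b, δ)` is a Lie bialgebra. -/
def IsLieBialgebra {k L : Type*} [Field k] [AddCommGroup L] [Module k L]
    (b : L →ₗ[k] L →ₗ[k] L) (δ : L →ₗ[k] L ⊗[k] L) : Prop :=
  IsLieBracket b ∧ IsLieCoalgebra δ ∧
    ∀ a c, δ (b a c) = adT b a (δ c) - adT b c (δ a)

variable {k g V : Type*} [Field k] [CharZero k]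
  [AddCommGroup g] [Module k g] [AddCommGroup V] [Module k V]

/-- The unified co-product map on `E = g ⊕ V`:
`δ_E(a + x) = δ_g(a) + Δ_E(x) − τΔ_E(x) + Δ_V(x) + δ_V(x)`. -/
def uniCoprod (δg : g →ₗ[k] g ⊗[k] g) (ΔE : V →ₗ[k] g ⊗[k] V)
    (ΔV : V →ₗ[k] g ⊗[k] g) (δV : V →ₗ[k] V ⊗[k] V) :
    (g × V) →ₗ[k] (g × V) ⊗[k] (g × V) :=
  map (inl k g V) (inl k g V) ∘ₗ δg ∘ₗ fst k g V +
    (map (inl k g V) (inr k g V) ∘ₗ ΔE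
      - map (inr k g V) (inl k g V) ∘ₗ flipT k g V ∘ₗ ΔE
      + map (inl k g V) (inl k g V) ∘ₗ ΔV
      + map (inr k g V) (inr k g V) ∘ₗ δV) ∘ₗ snd k g V

/-- Conditions (CLE1)–(CLE5): `(Δ_E, Δ_V, δ_V)` is a Lie coalgebraic extending
structure of `(g, δ_g)` by `V`. -/
def IsCoalgExtStructure (δg : g →ₗ[k] g ⊗[k] g) (ΔE : V →ₗ[k] g ⊗[k] V)
    (ΔV : V →ₗ[k] g ⊗[k] g) (δV : V →ₗ[k] V ⊗[k] V) : Prop :=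
  -- (CLE1)
  (∀ x, flipT k g g (ΔV x) = - ΔV x) ∧ (∀ x, flipT k V V (δV x) = - δV x) ∧
  -- (CLE2)
  (∀ x, lTensor g ΔV (ΔE x) + lTensor g δg (ΔV x)
      - swap12 k g g g (lTensor g ΔV (ΔE x)) - swap12 k g g g (lTensor g δg (ΔV x)) =
      - asr k g g g (rTensor g ΔV (flipT k g V (ΔE x)))
      + asr k g g g (rTensor g δg (ΔV x))) ∧
  -- (CLE3)
  (∀ x, lTensor g ΔE (ΔE x) - swap12 k g g V (lTensor g ΔE (ΔE x)) =
      asr k g g V (rTensor V δg (ΔE x)) + asr k g g V (rTensor V ΔV (δV x))) ∧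
  -- (CLE4)
  (∀ x, lTensor g δV (ΔE x) - swap12 k V g V (lTensor V ΔE (δV x)) =
      asr k g V V (rTensor V ΔE (δV x))) ∧
  -- (CLE5)
  (∀ x, lTensor V δV (δV x) - swap12 k V V V (lTensor V δV (δV x)) =
      asr k V V V (rTensor V δV (δV x)))

end
noncomputable section
variable {k g V : Type*} [Field k] [CharZero k]
  [AddCommGroup g] [Module k g] [AddCommGroup V] [Module k V]

/-- The unified product bracket on `E = g ⊕ V`:
`[a+x, b+y] = [a,b] + x⊳b − y⊳a + f(x,y) + x⊲b − y⊲a + {x,y}`. -/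
def uniBracket (gbr : g →ₗ[k] g →ₗ[k] g) (lhd : V →ₗ[k] g →ₗ[k] V)
    (rhd : V →ₗ[k] g →ₗ[k] g) (f : V →ₗ[k] V →ₗ[k] g)
    (br : V →ₗ[k] V →ₗ[k] V) : (g × V) →ₗ[k] (g × V) →ₗ[k] (g × V) :=
  LinearMap.mk₂ k
    (fun u v => (gbr u.1 v.1 + rhd u.2 v.1 - rhd v.2 u.1 + f u.2 v.2,
                 lhd u.2 v.1 - lhd v.2 u.1 + br u.2 v.2))
    (by intro m₁ m₂ n; simp [Prod.ext_iff]; constructor <;> abel)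
    (by intro c m n; simp [Prod.ext_iff, smul_add, smul_sub])
    (by intro m n₁ n₂; simp [Prod.ext_iff]; constructor <;> abel)
    (by intro c m n; simp [Prod.ext_iff, smul_add, smul_sub])

/-- Conditions (LE1)–(LE7): `(⊲, ⊳, f, {·,·})` is a Lie extending structure
of the Lie algebra `(g, [·,·])` by `V` (Agore–Militaru). -/
def IsLieExtStructure (gbr : g →ₗ[k] g →ₗ[k] g) (lhd : V →ₗ[k] g →ₗ[k] V)
    (rhd : V →ₗ[k] g →ₗ[k] g) (f : V →ₗ[k] V →ₗ[k] g)
    (br : V →ₗ[k] V →ₗ[k] V) : Prop :=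
  -- (LE1)
  (∀ x, f x x = 0) ∧ (∀ x, br x x = 0) ∧
  -- (LE2) : (V, ⊲) is a right g-module
  (∀ x a b, lhd x (gbr a b) = lhd (lhd x a) b - lhd (lhd x b) a) ∧
  -- (LE3)
  (∀ x a b, rhd x (gbr a b) = gbr (rhd x a) b + gbr a (rhd x b)
      + rhd (lhd x a) b - rhd (lhd x b) a) ∧
  -- (LE4)
  (∀ x y a, lhd (br x y) a = br x (lhd y a) + br (lhd x a) y
      + lhd x (rhd y a) - lhd y (rhd x a)) ∧
  -- (LE5)
  (∀ x y a, rhd (br x y) a = rhd x (rhd y a) - rhd y (rhd x a)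
      + gbr a (f x y) + f x (lhd y a) + f (lhd x a) y) ∧
  -- (LE6)
  (∀ x y z, f x (br y z) + f y (br z x) + f z (br x y)
      + rhd x (f y z) + rhd y (f z x) + rhd z (f x y) = 0) ∧
  -- (LE7)
  (∀ x y z, br x (br y z) + br y (br z x) + br z (br x y)
      + lhd x (f y z) + lhd y (f z x) + lhd z (f x y) = 0)

/-- Conditions (BE2)–(BE7): compatibility between the Lie extending structure
and the Lie coalgebraic extending structure. -/
def BEConditions (gbr : g →ₗ[k] g →ₗ[k] g) (δg : g →ₗ[k] g ⊗[k] g)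
    (lhd : V →ₗ[k] g →ₗ[k] V) (rhd : V →ₗ[k] g →ₗ[k] g)
    (f : V →ₗ[k] V →ₗ[k] g) (br : V →ₗ[k] V →ₗ[k] V)
    (ΔE : V →ₗ[k] g ⊗[k] V) (ΔV : V →ₗ[k] g ⊗[k] g)
    (δV : V →ₗ[k] V ⊗[k] V) : Prop :=
  -- (BE2)
  (∀ a x, - ΔV (lhd x a) - δg (rhd x a) =
      flipT k g g (lTensor g (rhd.flip a) (ΔE x)) - lTensor g (rhd.flip a) (ΔE x)
      + adT gbr a (ΔV x)
      - (rTensor g (rhd x) (δg a) + lTensor g (rhd x) (δg a))) ∧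
  -- (BE3)
  (∀ a x, ΔE (lhd x a) =
      - rTensor V (gbr a) (ΔE x) + lTensor g (lhd.flip a) (ΔE x)
      + rTensor V (rhd.flip a) (δV x) + lTensor g (lhd x) (δg a)) ∧
  -- (BE4)
  (∀ a x, δV (lhd x a) =
      lTensor V (lhd.flip a) (δV x) + rTensor V (lhd.flip a) (δV x)) ∧
  -- (BE5)
  (∀ x y, δg (f x y) + ΔV (br x y) =
      (lTensor g (f x) (ΔE y) - flipT k g g (lTensor g (f x) (ΔE y)))
      + (rTensor g (rhd x) (ΔV y) + lTensor g (rhd x) (ΔV y))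
      - (lTensor g (f y) (ΔE x) - flipT k g g (lTensor g (f y) (ΔE x)))
      - (rTensor g (rhd y) (ΔV x) + lTensor g (rhd y) (ΔV x))) ∧
  -- (BE6)
  (∀ x y, ΔE (br x y) =
      (rTensor V (rhd x) (ΔE y) + lTensor g (br x) (ΔE y))
      + lTensor g (lhd x) (ΔV y) + rTensor V (f x) (δV y)
      - (rTensor V (rhd y) (ΔE x) + lTensor g (br y) (ΔE x))
      - lTensor g (lhd y) (ΔV x) - rTensor V (f y) (δV x)) ∧
  -- (BE7)
  (∀ x y, δV (br x y) =
      (rTensor V (lhd x) (ΔE y) - flipT k V V (rTensor V (lhd x) (ΔE y)))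
      + (rTensor V (br x) (δV y) + lTensor V (br x) (δV y))
      - (rTensor V (lhd y) (ΔE x) - flipT k V V (rTensor V (lhd y) (ΔE x)))
      - (rTensor V (br y) (δV x) + lTensor V (br y) (δV x)))

end

noncomputable section AuxDCS
open TensorProduct LinearMap

section KeyLemmas
variable {M : Type*} [AddCommGroup M]

lemma eq_of_key1 {g1 g2 a1 a2 : M} (ka : a1 = a2)
    (h : g1 - g2 = a1 - a2) : g1 = g2 := by
  rw [ka, sub_self] at h; exact sub_eq_zero.mp h

lemma eq_of_key2 {g1 g2 a1 a2 b1 b2 : M} (ka : a1 = a2) (kb : b1 = b2)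
    (h : g1 - g2 = (a1 - a2) + (b1 - b2)) : g1 = g2 := by
  rw [ka, kb, sub_self, sub_self, add_zero] at h; exact sub_eq_zero.mp h

lemma eq_of_key3 {g1 g2 a1 a2 b1 b2 c1 c2 : M} (ka : a1 = a2) (kb : b1 = b2)
    (kc : c1 = c2) (h : g1 - g2 = (a1 - a2) + (b1 - b2) + (c1 - c2)) : g1 = g2 := by
  rw [ka, kb, kc, sub_self, sub_self, sub_self, add_zero, add_zero] at h
  exact sub_eq_zero.mp h

lemma eq_of_key4 {g1 g2 a1 a2 b1 b2 c1 c2 d1 d2 : M} (ka : a1 = a2) (kb : b1 = b2)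
    (kc : c1 = c2) (kd : d1 = d2)
    (h : g1 - g2 = (a1 - a2) + (b1 - b2) + (c1 - c2) + (d1 - d2)) : g1 = g2 := by
  rw [ka, kb, kc, kd, sub_self, sub_self, sub_self, sub_self,
    add_zero, add_zero, add_zero] at h
  exact sub_eq_zero.mp h

end KeyLemmas

variable {k A B C D A' B' C' : Type*} [Field k]
  [AddCommGroup A] [Module k A] [AddCommGroup B] [Module k B]
  [AddCommGroup C] [Module k C] [AddCommGroup D] [Module k D]
  [AddCommGroup A'] [Module k A'] [AddCommGroup B'] [Module k B']
  [AddCommGroup C'] [Module k C']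

lemma map_map' (f : A →ₗ[k] B) (h : C →ₗ[k] D) (p : B →ₗ[k] A') (q : D →ₗ[k] B')
    (t : A ⊗[k] C) : map p q (map f h t) = map (p ∘ₗ f) (q ∘ₗ h) t := by
  rw [TensorProduct.map_comp]; rfl

lemma map_zero_left' (h : C →ₗ[k] D) (t : A ⊗[k] C) : map (0 : A →ₗ[k] B) h t = 0 := by
  induction t using TensorProduct.induction_on with
  | zero => simp
  | tmul a c => simp
  | add s t hs ht => simp [map_add, hs, ht]

lemma map_zero_right' (f : A →ₗ[k] B) (t : A ⊗[k] C) : map f (0 : C →ₗ[k] D) t = 0 := by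
  induction t using TensorProduct.induction_on with
  | zero => simp
  | tmul a c => simp
  | add s t hs ht => simp [map_add, hs, ht]

lemma flipT_map (f : A →ₗ[k] B) (h : C →ₗ[k] D) (t : A ⊗[k] C) :
    flipT k B D (map f h t) = map h f (flipT k A C t) := by
  induction t using TensorProduct.induction_on with
  | zero => simp
  | tmul a c => simp [flipT]
  | add s t hs ht => simp [map_add, hs, ht]

lemma flipT_rTensor (f : A →ₗ[k] B) (t : A ⊗[k] C) :
    flipT k B C (rTensor C f t) = lTensor C f (flipT k A C t) := by
  induction t using TensorProduct.induction_on with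
  | zero => simp
  | tmul a c => simp [flipT]
  | add s t hs ht => simp [map_add, hs, ht]

lemma flipT_lTensor (h : C →ₗ[k] D) (t : A ⊗[k] C) :
    flipT k A D (lTensor A h t) = rTensor A h (flipT k A C t) := by
  induction t using TensorProduct.induction_on with
  | zero => simp
  | tmul a c => simp [flipT]
  | add s t hs ht => simp [map_add, hs, ht]

lemma swap12_map (f : A →ₗ[k] A') (h : B →ₗ[k] B') (l : C →ₗ[k] C')
    (t : A ⊗[k] (B ⊗[k] C)) :
    swap12 k A' B' C' (map f (map h l) t) = map h (map f l) (swap12 k A B C t) := by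
  induction t using TensorProduct.induction_on with
  | zero => simp
  | tmul a bc =>
    induction bc using TensorProduct.induction_on with
    | zero => simp
    | tmul b c => simp [swap12, flipT]
    | add s t hs ht =>
      simp only [map_tmul, tmul_add, map_add] at hs ht ⊢; rw [hs, ht]
  | add s t hs ht => simp [map_add, hs, ht]

lemma asr_map (f : A →ₗ[k] A') (h : B →ₗ[k] B') (l : C →ₗ[k] C')
    (t : (A ⊗[k] B) ⊗[k] C) :
    asr k A' B' C' (map (map f h) l t) = map f (map h l) (asr k A B C t) := by
  induction t using TensorProduct.induction_on with
  | zero => simp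
  | tmul ab c =>
    induction ab using TensorProduct.induction_on with
    | zero => simp
    | tmul a b => simp [asr]
    | add s t hs ht =>
      simp only [map_tmul, add_tmul, map_add] at hs ht ⊢; rw [hs, ht]
  | add s t hs ht => simp [map_add, hs, ht]

variable {g V : Type*} [AddCommGroup g] [Module k g] [AddCommGroup V] [Module k V]

lemma uniBracket_apply (gbr : g →ₗ[k] g →ₗ[k] g) (lhd : V →ₗ[k] g →ₗ[k] V)
    (rhd : V →ₗ[k] g →ₗ[k] g) (vbr : V →ₗ[k] V →ₗ[k] V) (a b : g) (x y : V) :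
    uniBracket gbr lhd rhd 0 vbr (a, x) (b, y) =
      (gbr a b + rhd x b - rhd y a, lhd x b - lhd y a + vbr x y) := by
  simp [uniBracket]

lemma uniCoprod_apply (δg : g →ₗ[k] g ⊗[k] g) (δV : V →ₗ[k] V ⊗[k] V) (a : g) (x : V) :
    uniCoprod δg 0 0 δV (a, x) =
      map (inl k g V) (inl k g V) (δg a) + map (inr k g V) (inr k g V) (δV x) := by
  simp [uniCoprod]

lemma adT_add {L : Type*} [AddCommGroup L] [Module k L] (b : L →ₗ[k] L →ₗ[k] L)
    (u v : L) : adT b (u + v) = adT b u + adT b v := by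
  unfold adT
  rw [map_add, rTensor_add, lTensor_add]
  abel

variable (gbr : g →ₗ[k] g →ₗ[k] g) (lhd : V →ₗ[k] g →ₗ[k] V)
    (rhd : V →ₗ[k] g →ₗ[k] g) (vbr : V →ₗ[k] V →ₗ[k] V)

lemma adT_inl_ll (a : g) (t : g ⊗[k] g) :
    adT (uniBracket gbr lhd rhd 0 vbr) (a, 0) (map (inl k g V) (inl k g V) t) =
      map (inl k g V) (inl k g V) (adT gbr a t) := by
  induction t using TensorProduct.induction_on with
  | zero => simp
  | tmul c d =>
    simp only [adT, map_tmul, LinearMap.add_apply, rTensor_tmul, lTensor_tmul, inl_apply,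
      uniBracket_apply, map_zero, LinearMap.zero_apply, sub_zero, add_zero, zero_sub, zero_add,
      neg_zero, tmul_add, add_tmul, map_add]
  | add s t hs ht => simp only [map_add] at *; rw [hs, ht]; try abel

lemma adT_inr_rr (x : V) (s : V ⊗[k] V) :
    adT (uniBracket gbr lhd rhd 0 vbr) (0, x) (map (inr k g V) (inr k g V) s) =
      map (inr k g V) (inr k g V) (adT vbr x s) := by
  induction s using TensorProduct.induction_on with
  | zero => simp
  | tmul c d =>
    simp only [adT, map_tmul, LinearMap.add_apply, rTensor_tmul, lTensor_tmul, inr_apply,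
      uniBracket_apply, map_zero, LinearMap.zero_apply, sub_zero, add_zero, zero_sub, zero_add,
      sub_self, neg_zero, tmul_add, add_tmul, map_add]
  | add s t hs ht => simp only [map_add] at *; rw [hs, ht]; try abel

lemma adT_inr_ll (x : V) (t : g ⊗[k] g) :
    adT (uniBracket gbr lhd rhd 0 vbr) (0, x) (map (inl k g V) (inl k g V) t) =
      map (inl k g V) (inl k g V) (rTensor g (rhd x) t + lTensor g (rhd x) t)
      + map (inr k g V) (inl k g V) (rTensor g (lhd x) t)
      + map (inl k g V) (inr k g V) (lTensor g (lhd x) t) := by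
  induction t using TensorProduct.induction_on with
  | zero => simp
  | tmul c d =>
    simp only [adT, map_tmul, LinearMap.add_apply, rTensor_tmul, lTensor_tmul, inl_apply, inr_apply,
      uniBracket_apply, map_zero, LinearMap.zero_apply, sub_zero, add_zero, zero_sub, zero_add,
      sub_self, neg_zero, map_add, tmul_add, add_tmul]
    rw [show ((rhd x c, lhd x c) : g × V) = (rhd x c, 0) + (0, lhd x c) by simp,
      show ((rhd x d, lhd x d) : g × V) = (rhd x d, 0) + (0, lhd x d) by simp,
      add_tmul, tmul_add]
    abel
  | add s t hs ht => simp only [map_add] at *; rw [hs, ht]; try abel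

lemma adT_inl_rr (b : g) (s : V ⊗[k] V) :
    adT (uniBracket gbr lhd rhd 0 vbr) (b, 0) (map (inr k g V) (inr k g V) s) =
      - map (inl k g V) (inr k g V) (rTensor V (rhd.flip b) s)
      - map (inr k g V) (inr k g V) (rTensor V (lhd.flip b) s)
      - map (inr k g V) (inl k g V) (lTensor V (rhd.flip b) s)
      - map (inr k g V) (inr k g V) (lTensor V (lhd.flip b) s) := by
  induction s using TensorProduct.induction_on with
  | zero => simp
  | tmul c d =>
    simp only [adT, map_tmul, LinearMap.add_apply, rTensor_tmul, lTensor_tmul, inl_apply, inr_apply,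
      flip_apply, uniBracket_apply, map_zero, LinearMap.zero_apply, sub_zero, add_zero, zero_sub,
      zero_add, sub_self, neg_zero, map_add, tmul_add, add_tmul]
    rw [show ((-(rhd c b), -(lhd c b)) : g × V) = -(rhd c b, (0:V)) + -((0:g), lhd c b) by simp,
      show ((-(rhd d b), -(lhd d b)) : g × V) = -(rhd d b, (0:V)) + -((0:g), lhd d b) by simp,
      add_tmul, tmul_add, neg_tmul, neg_tmul, tmul_neg, tmul_neg]
    abel
  | add s t hs ht => simp only [map_add] at *; rw [hs, ht]; try abel

variable (δg : g →ₗ[k] g ⊗[k] g) (δV : V →ₗ[k] V ⊗[k] V)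

lemma lT_uniCoprod_ll (t : g ⊗[k] g) :
    lTensor (g × V) (uniCoprod δg 0 0 δV) (map (inl k g V) (inl k g V) t) =
      map (inl k g V) (map (inl k g V) (inl k g V)) (lTensor g δg t) := by
  induction t using TensorProduct.induction_on with
  | zero => simp
  | tmul c d => simp [uniCoprod_apply]
  | add s t hs ht => simp only [map_add] at *; rw [hs, ht]

lemma rT_uniCoprod_ll (t : g ⊗[k] g) :
    rTensor (g × V) (uniCoprod δg 0 0 δV) (map (inl k g V) (inl k g V) t) =
      map (map (inl k g V) (inl k g V)) (inl k g V) (rTensor g δg t) := by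
  induction t using TensorProduct.induction_on with
  | zero => simp
  | tmul c d => simp [uniCoprod_apply]
  | add s t hs ht => simp only [map_add] at *; rw [hs, ht]

lemma lT_uniCoprod_rr (t : V ⊗[k] V) :
    lTensor (g × V) (uniCoprod δg 0 0 δV) (map (inr k g V) (inr k g V) t) =
      map (inr k g V) (map (inr k g V) (inr k g V)) (lTensor V δV t) := by
  induction t using TensorProduct.induction_on with
  | zero => simp
  | tmul c d => simp [uniCoprod_apply]
  | add s t hs ht => simp only [map_add] at *; rw [hs, ht]

lemma rT_uniCoprod_rr (t : V ⊗[k] V) :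
    rTensor (g × V) (uniCoprod δg 0 0 δV) (map (inr k g V) (inr k g V) t) =
      map (map (inr k g V) (inr k g V)) (inr k g V) (rTensor V δV t) := by
  induction t using TensorProduct.induction_on with
  | zero => simp
  | tmul c d => simp [uniCoprod_apply]
  | add s t hs ht => simp only [map_add] at *; rw [hs, ht]

end AuxDCS

noncomputable section
variable {k g V : Type*} [Field k] [CharZero k]
  [AddCommGroup g] [Module k g] [AddCommGroup V] [Module k V]

set_option maxHeartbeats 3000000 in
/-- **Theorem (double cross sum).** Given Lie bialgebras `(g,[·,·],δ_g)` and
`(V,{·,·},δ_V)` and actions `⊳ : V×g → g`, `⊲ : V×g → V` (with `f`, `Δ_E`, `Δ_V`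
trivial), the bracket `[a+x, b+y] = [a,b] + x⊳b − y⊳a + x⊲b − y⊲a + {x,y}` and
co-bracket `δ(a+x) = δ_g(a) + δ_V(x)` make `g ⊕ V` a Lie bialgebra iff the listed
matched-pair and compatibility conditions hold. -/
theorem double_cross_sum_iff (gbr : g →ₗ[k] g →ₗ[k] g) (δg : g →ₗ[k] g ⊗[k] g)
    (hg : IsLieBialgebra gbr δg)
    (vbr : V →ₗ[k] V →ₗ[k] V) (δV : V →ₗ[k] V ⊗[k] V)
    (hV : IsLieBialgebra vbr δV)
    (lhd : V →ₗ[k] g →ₗ[k] V) (rhd : V →ₗ[k] g →ₗ[k] g) :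
    IsLieBialgebra (uniBracket gbr lhd rhd 0 vbr) (uniCoprod δg 0 0 δV) ↔
      -- (V, ⊲) is a right g-module
      (∀ x a b, lhd x (gbr a b) = lhd (lhd x a) b - lhd (lhd x b) a) ∧
      -- (g, ⊳) is a left V-module, i.e. {x,y}⊳a = x⊳(y⊳a) − y⊳(x⊳a)
      (∀ x y a, rhd (vbr x y) a = rhd x (rhd y a) - rhd y (rhd x a)) ∧
      -- (LE3)
      (∀ x a b, rhd x (gbr a b) = gbr (rhd x a) b + gbr a (rhd x b)
          + rhd (lhd x a) b - rhd (lhd x b) a) ∧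
      -- (LE4)
      (∀ x y a, lhd (vbr x y) a = vbr x (lhd y a) + vbr (lhd x a) y
          + lhd x (rhd y a) - lhd y (rhd x a)) ∧
      -- (BE4) : δ_V(x⊲a) = (I⊗R_⊲(a) + R_⊲(a)⊗I)δ_V(x)
      (∀ a x, δV (lhd x a) =
          lTensor V (lhd.flip a) (δV x) + rTensor V (lhd.flip a) (δV x)) ∧
      -- δ_g(x⊳a) = (L_⊳(x)⊗I + I⊗L_⊳(x))δ_g(a)
      (∀ a x, δg (rhd x a) =
          rTensor g (rhd x) (δg a) + lTensor g (rhd x) (δg a)) ∧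
      -- (R_⊳(a)⊗I)δ_V(x) + (I⊗L_⊲(x))δ_g(a) = 0
      (∀ a x, rTensor V (rhd.flip a) (δV x) + lTensor g (lhd x) (δg a) = 0) := by
  obtain ⟨⟨hgalt, hgJ⟩, ⟨hganti, hgco⟩, hgcomp⟩ := hg
  obtain ⟨⟨hvalt, hvJ⟩, ⟨hvanti, hvco⟩, hvcomp⟩ := hV
  have gskew : ∀ a b, gbr a b = -gbr b a := fun a b => by
    have h := hgalt (a + b)
    simp only [map_add, LinearMap.add_apply, hgalt, zero_add, add_zero] at h
    rw [add_comm] at h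
    exact eq_neg_of_add_eq_zero_left h
  have vskew : ∀ x y, vbr x y = -vbr y x := fun x y => by
    have h := hvalt (x + y)
    simp only [map_add, LinearMap.add_apply, hvalt, zero_add, add_zero] at h
    rw [add_comm] at h
    exact eq_neg_of_add_eq_zero_left h
  constructor
  · rintro ⟨⟨-, HJ⟩, -, Hcomp⟩
    refine ⟨?_, ?_, ?_, ?_, ?_, ?_, ?_⟩
    · intro x a b
      have h := HJ (0, x) (a, 0) (b, 0)
      simp only [uniBracket_apply, map_zero, LinearMap.zero_apply, add_zero, zero_add, sub_zero,
        zero_sub, neg_zero, Prod.mk_add_mk, Prod.mk.injEq] at h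
      exact eq_of_key1 h.2 (by abel)
    · intro x y a
      have h := HJ (0, x) (0, y) (a, 0)
      simp only [uniBracket_apply, map_zero, LinearMap.zero_apply, add_zero, zero_add, sub_zero,
        zero_sub, neg_zero, Prod.mk_add_mk, Prod.mk.injEq] at h
      exact eq_of_key1 h.1.symm (by abel)
    · intro x a b
      have h := HJ (0, x) (a, 0) (b, 0)
      simp only [uniBracket_apply, map_zero, LinearMap.zero_apply, add_zero, zero_add, sub_zero,
        zero_sub, neg_zero, Prod.mk_add_mk, Prod.mk.injEq] at h
      exact eq_of_key1 h.1 (by abel)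
    · intro x y a
      have h := HJ (0, x) (0, y) (a, 0)
      simp only [uniBracket_apply, map_zero, LinearMap.zero_apply, add_zero, zero_add, sub_zero,
        zero_sub, neg_zero, Prod.mk_add_mk, Prod.mk.injEq] at h
      exact eq_of_key2 h.2.symm (vskew (lhd x a) y).symm (by abel)
    · intro a x
      have h := Hcomp (0, x) (a, 0)
      simp only [uniBracket_apply, map_zero, LinearMap.zero_apply, add_zero, zero_add, sub_zero,
        neg_zero, zero_sub] at h
      rw [uniCoprod_apply, uniCoprod_apply, uniCoprod_apply] at h
      simp only [map_zero, add_zero, zero_add] at h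
      rw [adT_inr_ll, adT_inl_rr] at h
      have h5 := congrArg (map (snd k g V) (snd k g V)) h
      simp [map_map', map_zero_left', map_zero_right', map_add, map_sub, map_neg, ← LinearMap.comp_assoc] at h5
      exact eq_of_key1 h5 (by abel)
    · intro a x
      have h := Hcomp (0, x) (a, 0)
      simp only [uniBracket_apply, map_zero, LinearMap.zero_apply, add_zero, zero_add, sub_zero,
        neg_zero, zero_sub] at h
      rw [uniCoprod_apply, uniCoprod_apply, uniCoprod_apply] at h
      simp only [map_zero, add_zero, zero_add] at h
      rw [adT_inr_ll, adT_inl_rr] at h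
      have h6 := congrArg (map (fst k g V) (fst k g V)) h
      simp [map_map', map_zero_left', map_zero_right', map_add, map_sub, map_neg, ← LinearMap.comp_assoc] at h6
      exact eq_of_key1 h6 (by abel)
    · intro a x
      have h := Hcomp (0, x) (a, 0)
      simp only [uniBracket_apply, map_zero, LinearMap.zero_apply, add_zero, zero_add, sub_zero,
        neg_zero, zero_sub] at h
      rw [uniCoprod_apply, uniCoprod_apply, uniCoprod_apply] at h
      simp only [map_zero, add_zero, zero_add] at h
      rw [adT_inr_ll, adT_inl_rr] at h
      have h7 := congrArg (map (fst k g V) (snd k g V)) h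
      simp [map_map', map_zero_left', map_zero_right', map_add, map_sub, map_neg, ← LinearMap.comp_assoc] at h7
      exact eq_of_key1 h7.symm (by unfold LinearMap.rTensor LinearMap.lTensor; abel)
  · rintro ⟨c1, c2, c3, c4, c5, c6, c7⟩
    have c7' : ∀ (a : g) (x : V),
        rTensor g (lhd x) (δg a) + lTensor V (rhd.flip a) (δV x) = 0 := by
      intro a x
      have h := congrArg (flipT k g V) (c7 a x)
      simp only [map_add, map_zero, flipT_rTensor, flipT_lTensor, hganti, hvanti,
        map_neg] at h
      exact eq_of_key1 h.symm (by abel)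
    have Balt : ∀ u, uniBracket gbr lhd rhd 0 vbr u u = 0 := by
      rintro ⟨a, x⟩
      rw [uniBracket_apply]
      simp [hgalt, hvalt, Prod.ext_iff]
    have Bskew : ∀ u v, uniBracket gbr lhd rhd 0 vbr u v
        = -uniBracket gbr lhd rhd 0 vbr v u := fun u v => by
      have h := Balt (u + v)
      simp only [map_add, LinearMap.add_apply, Balt, zero_add, add_zero] at h
      rw [add_comm] at h
      exact eq_neg_of_add_eq_zero_left h
    have BJac : ∀ u c d, uniBracket gbr lhd rhd 0 vbr u (uniBracket gbr lhd rhd 0 vbr c d)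
        = uniBracket gbr lhd rhd 0 vbr (uniBracket gbr lhd rhd 0 vbr u c) d
          + uniBracket gbr lhd rhd 0 vbr c (uniBracket gbr lhd rhd 0 vbr u d) := by
      intro u c d
      obtain ⟨a, x⟩ := u; obtain ⟨b, y⟩ := c; obtain ⟨c, z⟩ := d
      simp only [uniBracket_apply, Prod.mk_add_mk, Prod.mk.injEq]
      constructor
      · simp only [map_add, map_sub, LinearMap.add_apply, LinearMap.sub_apply]
        simp only [hgJ a b c, c3 x b c, c2 y z a, c3 z a b, c2 x y c, c3 y a c, c2 x z b,
          gskew (rhd z a) b]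
        abel
      · simp only [map_add, map_sub, LinearMap.add_apply, LinearMap.sub_apply]
        simp only [hvJ x y z, c1 x b c, c4 y z a, c1 z a b, c4 x y c, c1 y a c, c4 x z b,
          vskew (lhd x c) y]
        abel
    have case_rl : ∀ (x : V) (b : g),
        uniCoprod δg 0 0 δV (uniBracket gbr lhd rhd 0 vbr (0, x) (b, 0)) =
          adT (uniBracket gbr lhd rhd 0 vbr) (0, x) (uniCoprod δg 0 0 δV (b, 0))
          - adT (uniBracket gbr lhd rhd 0 vbr) (b, 0) (uniCoprod δg 0 0 δV (0, x)) := by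
      intro x b
      rw [uniBracket_apply]
      simp only [map_zero, LinearMap.zero_apply, add_zero, zero_add, sub_zero]
      rw [uniCoprod_apply, uniCoprod_apply, uniCoprod_apply]
      simp only [map_zero, add_zero, zero_add]
      rw [adT_inr_ll, adT_inl_rr]
      exact eq_of_key4 (congrArg (map (inl k g V) (inl k g V)) (c6 b x))
        (congrArg (map (inr k g V) (inr k g V)) (c5 b x))
        (congrArg (map (inl k g V) (inr k g V)) (c7 b x)).symm
        (congrArg (map (inr k g V) (inl k g V)) (c7' b x)).symm
        (by simp only [map_add, map_zero]; abel)
    have case_ll : ∀ a b : g,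
        uniCoprod δg 0 0 δV (uniBracket gbr lhd rhd 0 vbr (a, 0) (b, 0)) =
          adT (uniBracket gbr lhd rhd 0 vbr) (a, 0) (uniCoprod δg 0 0 δV (b, 0))
          - adT (uniBracket gbr lhd rhd 0 vbr) (b, 0) (uniCoprod δg 0 0 δV (a, 0)) := by
      intro a b
      rw [uniBracket_apply]
      simp only [map_zero, LinearMap.zero_apply, add_zero, zero_add, sub_zero, sub_self]
      rw [uniCoprod_apply, uniCoprod_apply, uniCoprod_apply]
      simp only [map_zero, add_zero, zero_add]
      rw [adT_inl_ll, adT_inl_ll, hgcomp a b, map_sub]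
    have case_rr : ∀ x y : V,
        uniCoprod δg 0 0 δV (uniBracket gbr lhd rhd 0 vbr (0, x) (0, y)) =
          adT (uniBracket gbr lhd rhd 0 vbr) (0, x) (uniCoprod δg 0 0 δV (0, y))
          - adT (uniBracket gbr lhd rhd 0 vbr) (0, y) (uniCoprod δg 0 0 δV (0, x)) := by
      intro x y
      rw [uniBracket_apply]
      simp only [map_zero, LinearMap.zero_apply, add_zero, zero_add, sub_zero, sub_self]
      rw [uniCoprod_apply, uniCoprod_apply, uniCoprod_apply]
      simp only [map_zero, add_zero, zero_add]
      rw [adT_inr_rr, adT_inr_rr, hvcomp x y, map_sub]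
    have case_lr : ∀ (a : g) (y : V),
        uniCoprod δg 0 0 δV (uniBracket gbr lhd rhd 0 vbr (a, 0) (0, y)) =
          adT (uniBracket gbr lhd rhd 0 vbr) (a, 0) (uniCoprod δg 0 0 δV (0, y))
          - adT (uniBracket gbr lhd rhd 0 vbr) (0, y) (uniCoprod δg 0 0 δV (a, 0)) := by
      intro a y
      rw [Bskew (a, 0) (0, y), map_neg, case_rl y a, neg_sub]
    refine ⟨⟨Balt, BJac⟩, ⟨?_, ?_⟩, ?_⟩
    · rintro ⟨a, x⟩
      rw [uniCoprod_apply]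
      simp only [map_add, flipT_map, hganti, hvanti, map_neg]
      abel
    · rintro ⟨a, x⟩
      rw [uniCoprod_apply]
      simp only [map_add, lT_uniCoprod_ll, lT_uniCoprod_rr, rT_uniCoprod_ll,
        rT_uniCoprod_rr, swap12_map, asr_map]
      exact eq_of_key2
        (congrArg (map (inl k g V) (map (inl k g V) (inl k g V))) (hgco a))
        (congrArg (map (inr k g V) (map (inr k g V) (inr k g V))) (hvco x))
        (by simp only [map_sub]; abel)
    · intro u v
      obtain ⟨a, x⟩ := u; obtain ⟨b, y⟩ := v
      rw [show ((a, x) : g × V) = (a, 0) + (0, x) by simp,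
        show ((b, y) : g × V) = (b, 0) + (0, y) by simp]
      simp only [map_add, LinearMap.add_apply, adT_add]
      rw [case_ll a b, case_lr a y, case_rl x b, case_rr x y]
      abel

end
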